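/- Let χ : V → S be a coloring of the vertices, let X ⊆ S be a set of colors with |X| ≥ 2 and |X| − 1 ≤ l_p, and let v ∈ V. Then there exists a feasible path P ending at v with |V(P)| = |X| and χ(V(P)) = X if and only if χ(v) ∈ X and there exists a vertex u with (u,v) ∈ A and a feasible path P' ending at u with |V(P')| = |X| − 1 and χ(V(P')) = X ∖ {χ(v)}. -/

import Mathlib

/-- A feasible path (here single-vertex paths, of length `0`, are allowed):
a nonempty list of distinct vertices joined by arcs, starting at a vertex of `B`,
of length (number of arcs) at most `lp`. -/
def FeasPathL {V : Type*} (A : V → V → Prop) (B : Set V) (lp : ℕ)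
    (P : List V) : Prop :=
  P ≠ [] ∧ P.Nodup ∧ P.Chain' A ∧ (∃ b ∈ B, P.head? = some b) ∧ P.length - 1 ≤ lp

/-- (DP recurrence for color-coding) Let `χ : V → S` be a coloring, `X` a set of
colors with `|X| ≥ 2` and `|X| - 1 ≤ l_p`, and `v` a vertex. There is a feasible
path `P` ending at `v` with `|V(P)| = |X|` and `χ(V(P)) = X` iff `χ(v) ∈ X` and
there are an arc `(u,v) ∈ A` and a feasible path `P'` ending at `u` with
`|V(P')| = |X| - 1` and `χ(V(P')) = X ∖ {χ(v)}`. -/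
theorem feasible_path_color_recurrence {V : Type*} {S : Type*}
    [Fintype V] [DecidableEq V] [DecidableEq S]
    (A : V → V → Prop) (B : Set V) (lp : ℕ)
    (hloop : ∀ v, ¬ A v v) (hB : ∀ v u, A v u → u ∉ B)
    (χ : V → S) (X : Finset S) (hX2 : 2 ≤ X.card) (hXlp : X.card - 1 ≤ lp)
    (v : V) :
    (∃ P : List V, FeasPathL A B lp P ∧ P.getLast? = some v ∧
        P.toFinset.card = X.card ∧ P.toFinset.image χ = X) ↔
      (χ v ∈ X ∧ ∃ u : V, A u v ∧ ∃ P' : List V, FeasPathL A B lp P' ∧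
        P'.getLast? = some u ∧ P'.toFinset.card = X.card - 1 ∧
        P'.toFinset.image χ = X.erase (χ v)) := by
  constructor
  · rintro ⟨P, ⟨hne, hnd, hch, ⟨b, hbB, hhead⟩, hlen⟩, hlast, hcard, himg⟩
    obtain ⟨Q, rfl⟩ := List.getLast?_eq_some_iff.mp hlast
    have hQnd : Q.Nodup := (List.nodup_append.mp hnd).1
    have hvQ : v ∉ Q := by
      intro hv
      exact (List.disjoint_right.mp (List.nodup_append'.mp hnd).2.2 (by simp)) hv
    have hlenP : (Q ++ [v]).length = X.card := by
      rw [← List.toFinset_card_of_nodup hnd, hcard]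
    have hlenQ : Q.length = X.card - 1 := by
      simp at hlenP; omega
    have hQne : Q ≠ [] := by
      intro h; subst h; simp at hlenQ; omega
    obtain ⟨u, hu⟩ := List.getLast?_isSome.mpr hQne |> Option.isSome_iff_exists.mp
    have hvmem : v ∈ (Q ++ [v]).toFinset := by simp
    have hχv : χ v ∈ X := himg ▸ Finset.mem_image_of_mem χ hvmem
    have hPfin : (Q ++ [v]).toFinset = insert v Q.toFinset := by
      rw [List.toFinset_append]
      simp only [List.toFinset_cons, List.toFinset_nil, LawfulSingleton.insert_empty_eq]
      rw [Finset.union_comm, ← Finset.insert_eq]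
    have hχvQ : χ v ∉ Q.toFinset.image χ := by
      intro hmem
      have h1 : (Q ++ [v]).toFinset.image χ = Q.toFinset.image χ := by
        rw [hPfin, Finset.image_insert, Finset.insert_eq_self.mpr hmem]
      have h2 : (Q.toFinset.image χ).card ≤ Q.toFinset.card := Finset.card_image_le
      rw [List.toFinset_card_of_nodup hQnd, hlenQ] at h2
      rw [himg] at h1
      have h3 : X.card = (Q.toFinset.image χ).card := by rw [h1]
      omega
    have himgQ : Q.toFinset.image χ = X.erase (χ v) := by
      apply Finset.Subset.antisymm
      · intro x hx
        refine Finset.mem_erase.mpr ⟨?_, ?_⟩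
        · rintro rfl; exact hχvQ hx
        · rw [← himg, hPfin, Finset.image_insert]; exact Finset.mem_insert_of_mem hx
      · intro x hx
        obtain ⟨hxne, hxX⟩ := Finset.mem_erase.mp hx
        rw [← himg, hPfin, Finset.image_insert, Finset.mem_insert] at hxX
        tauto
    refine ⟨hχv, u, ?_, Q, ⟨hQne, hQnd, (List.isChain_append.mp hch).1,
      ⟨b, hbB, ?_⟩, by omega⟩, hu, by rw [List.toFinset_card_of_nodup hQnd, hlenQ], himgQ⟩
    · exact (List.isChain_append.mp hch).2.2 u hu v (by simp)
    · rw [List.head?_append, Option.or_eq_some_iff] at hhead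
      rcases hhead with h | ⟨h, _⟩
      · exact h
      · rw [List.head?_eq_none_iff] at h; exact absurd h hQne
  · rintro ⟨hχv, u, hA, P', ⟨hne, hnd, hch, ⟨b, hbB, hhead⟩, hlen⟩, hlast, hcard, himg⟩
    have hlenP' : P'.length = X.card - 1 := by
      rw [← List.toFinset_card_of_nodup hnd, hcard]
    have hvP' : v ∉ P' := by
      intro hv
      have : χ v ∈ X.erase (χ v) := himg ▸ Finset.mem_image_of_mem χ (List.mem_toFinset.mpr hv)
      simp at this
    refine ⟨P' ++ [v], ⟨by simp, ?_, ?_, ⟨b, hbB, ?_⟩, by simp; omega⟩,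
      List.getLast?_concat, ?_, ?_⟩
    · rw [List.nodup_append']; exact ⟨hnd, List.nodup_singleton v, by simpa using hvP'⟩
    · refine List.isChain_append.mpr ?_
      refine ⟨hch, List.isChain_singleton v, ?_⟩
      intro x hx y hy
      rw [hlast] at hx; simp at hx hy; subst hx; subst hy; exact hA
    · rw [List.head?_append]
      cases P' with
      | nil => exact absurd rfl hne
      | cons a l => simpa using hhead
    · rw [List.toFinset_append]
      simp only [List.toFinset_cons, List.toFinset_nil, LawfulSingleton.insert_empty_eq]
      rw [Finset.union_comm, ← Finset.insert_eq,
        Finset.card_insert_of_notMem (by simpa using hvP'), hcard]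
      omega
    · rw [List.toFinset_append]
      simp only [List.toFinset_cons, List.toFinset_nil, LawfulSingleton.insert_empty_eq]
      rw [Finset.union_comm, ← Finset.insert_eq, Finset.image_insert, himg,
        Finset.insert_erase hχv]
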